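/- If γ : [0,1] → ℝ³ is an injective continuous path and β : [0,1] → ℝ³ is a continuous path with the same endpoints whose image contains the image of γ (β([0,1]) ⊇ γ([0,1])), then length(β) ≥ length(γ). -/

import Mathlib

open Set MeasureTheory ENNReal

local notation "E3" => EuclideanSpace ℝ (Fin 3)

lemma edist_le_hausdorff {s : Set E3} (hs : IsPreconnected s) {x y : E3}
    (hx : x ∈ s) (hy : y ∈ s) : edist x y ≤ μH[1] s := by
  rcases eq_or_ne x y with rfl | hne
  · simp
  set v := y - x with hv
  have hvne : v ≠ 0 := sub_ne_zero.2 hne.symm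
  set f : E3 → ℝ := fun z => inner ℝ v z with hf
  have hnn : ‖innerSL ℝ v‖₊ = ‖v‖₊ := NNReal.coe_injective (by simp [coe_nnnorm])
  have hlip : LipschitzWith ‖v‖₊ f := by
    have := (innerSL ℝ v).lipschitz
    rw [hnn] at this
    exact this
  have h1 : μH[1] (f '' s) ≤ (‖v‖₊ : ℝ≥0∞) ^ (1:ℝ) * μH[1] s :=
    hlip.hausdorffMeasure_image_le (by norm_num) s
  have hconn : IsPreconnected (f '' s) := hs.image f (hlip.continuous.continuousOn)
  have hsub : Icc (f x) (f y) ⊆ f '' s :=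
    hconn.Icc_subset (mem_image_of_mem f hx) (mem_image_of_mem f hy)
  have hfxy : f y - f x = ‖v‖ ^ 2 := by
    rw [hf]
    simp only
    rw [← inner_sub_right, ← hv, real_inner_self_eq_norm_sq]
  have h2 : ENNReal.ofReal (‖v‖ ^ 2) ≤ μH[1] (f '' s) := by
    have := measure_mono (μ := (volume : Measure ℝ)) hsub
    rw [Real.volume_Icc, hfxy] at this
    rwa [← hausdorffMeasure_real] at this
  have h3 : (‖v‖₊ : ℝ≥0∞) * edist x y ≤ (‖v‖₊ : ℝ≥0∞) * μH[1] s := by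
    calc (‖v‖₊ : ℝ≥0∞) * edist x y = ENNReal.ofReal (‖v‖ * ‖v‖) := by
          rw [edist_dist, dist_eq_norm, norm_sub_rev, ← hv,
            ← ENNReal.ofReal_coe_nnreal, coe_nnnorm, ← ENNReal.ofReal_mul (norm_nonneg _)]
      _ = ENNReal.ofReal (‖v‖ ^ 2) := by ring_nf
      _ ≤ μH[1] (f '' s) := h2
      _ ≤ (‖v‖₊ : ℝ≥0∞) ^ (1:ℝ) * μH[1] s := h1
      _ = (‖v‖₊ : ℝ≥0∞) * μH[1] s := by rw [ENNReal.rpow_one]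
  have hv0 : (‖v‖₊ : ℝ≥0∞) ≠ 0 := by simpa using hvne
  exact (ENNReal.mul_le_mul_iff_right hv0 ENNReal.coe_ne_top).1 h3


lemma evar_Icc_add_Icc (f : ℝ → E3) {a b c : ℝ} (hab : a ≤ b) (hbc : b ≤ c) :
    eVariationOn f (Icc a b) + eVariationOn f (Icc b c) = eVariationOn f (Icc a c) := by
  have := eVariationOn.Icc_add_Icc f (s := Icc a c) hab hbc ⟨hab, hbc⟩
  simp only [Icc_inter_Icc, max_self, min_self, max_eq_right hab, min_eq_right hbc,
    min_eq_left hbc] at this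
  exact this

lemma sum_evar (f : ℝ → E3) (u : ℕ → ℝ) (hu : Monotone u) :
    ∀ N : ℕ, ∑ j ∈ Finset.range N, eVariationOn f (Icc (u j) (u (j+1)))
      = eVariationOn f (Icc (u 0) (u N)) := by
  intro N
  induction N with
  | zero => simp [eVariationOn.subsingleton f (s := Icc (u 0) (u 0)) (by simp [Set.Icc_self])]
  | succ n ih =>
      rw [Finset.sum_range_succ, ih,
        evar_Icc_add_Icc f (hu (Nat.zero_le n)) (hu (Nat.le_succ n))]

lemma exists_piece {N : ℕ} (hN : 0 < N) {x : ℝ} (hx : x ∈ Icc (0:ℝ) 1) :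
    ∃ j : Fin N, x ∈ Icc ((j:ℝ)/N) (((j:ℝ)+1)/N) := by
  have hN' : (0:ℝ) < N := by exact_mod_cast hN
  rcases eq_or_lt_of_le hx.2 with h1 | h1
  · refine ⟨⟨N-1, by omega⟩, ?_, ?_⟩
    · show ((N-1:ℕ):ℝ)/N ≤ x
      rw [h1, div_le_one hN']
      exact_mod_cast Nat.sub_le N 1
    · show x ≤ (((N-1:ℕ):ℝ)+1)/N
      rw [h1, le_div_iff₀ hN', one_mul,
        show ((N-1:ℕ):ℝ)+1 = ((N-1+1 : ℕ):ℝ) by push_cast [Nat.cast_sub hN]; ring,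
        Nat.sub_add_cancel hN]
  · have hxN : 0 ≤ x * N := mul_nonneg hx.1 hN'.le
    refine ⟨⟨⌊x * N⌋₊, (Nat.floor_lt hxN).2 (by nlinarith)⟩, ?_, ?_⟩
    · show ((⌊x * N⌋₊:ℕ):ℝ)/N ≤ x
      rw [div_le_iff₀ hN']
      exact Nat.floor_le hxN
    · show x ≤ (((⌊x * N⌋₊:ℕ):ℝ)+1)/N
      rw [le_div_iff₀ hN']
      exact (Nat.lt_floor_add_one _).le

lemma hausdorff_le_evar (f : ℝ → E3) (hf : ContinuousOn f (Icc 0 1)) :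
    μH[1] (f '' Icc 0 1) ≤ eVariationOn f (Icc 0 1) := by
  have huc := (isCompact_Icc (a := (0:ℝ)) (b := 1)).uniformContinuousOn_of_continuous hf
  rw [Metric.uniformContinuousOn_iff] at huc
  have H : ∀ n : ℕ, ∃ N : ℕ, 0 < N ∧ ∀ x ∈ Icc (0:ℝ) 1, ∀ y ∈ Icc (0:ℝ) 1,
      dist x y ≤ 1/(N:ℝ) → dist (f x) (f y) ≤ 1/(n+1) := by
    intro n
    obtain ⟨δ, hδ, hδ'⟩ := huc (1/(n+1)) (by positivity)
    obtain ⟨N, hNδ⟩ := exists_nat_gt (2/δ)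
    have hN : 0 < N := by
      rcases Nat.eq_zero_or_pos N with h | h
      · subst h
        have h2 : 0 < 2/δ := by positivity
        simp only [Nat.cast_zero] at hNδ
        linarith
      · exact h
    refine ⟨N, hN, fun x hx y hy hxy => ?_⟩
    have hN' : (0:ℝ) < N := by exact_mod_cast hN
    have : dist x y < δ := by
      have : (1:ℝ)/N < δ := by
        rw [div_lt_iff₀ hN']
        rw [div_lt_iff₀ hδ] at hNδ
        nlinarith
      linarith
    exact (hδ' x hx y hy this).le
  choose N hNpos hN using H
  have key := MeasureTheory.Measure.hausdorffMeasure_le_liminf_sum (X := E3) 1 (f '' Icc 0 1)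
    (l := (Filter.atTop : Filter ℕ)) (fun n : ℕ => ENNReal.ofReal (1/(n+1:ℝ)))
    (by
      rw [← ENNReal.ofReal_zero]
      apply ENNReal.tendsto_ofReal
      exact tendsto_one_div_add_atTop_nhds_zero_nat)
    (fun n (j : Fin (N n)) => f '' Icc ((j:ℝ)/(N n)) (((j:ℝ)+1)/(N n)))
    ?_ ?_
  · refine key.trans ?_
    apply Filter.liminf_le_of_frequently_le'
    apply Filter.Frequently.of_forall
    intro n
    have hN' : (0:ℝ) < N n := by exact_mod_cast hNpos n
    have hsub : ∀ j : Fin (N n), Icc ((j:ℝ)/(N n)) (((j:ℝ)+1)/(N n)) ⊆ Icc (0:ℝ) 1 := by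
      intro j
      apply Icc_subset_Icc
      · positivity
      · rw [div_le_one hN']
        have := j.2
        exact_mod_cast Nat.succ_le_of_lt this
    calc ∑ j : Fin (N n), EMetric.diam (f '' Icc ((j:ℝ)/(N n)) (((j:ℝ)+1)/(N n))) ^ (1:ℝ)
        = ∑ j : Fin (N n), EMetric.diam (f '' Icc ((j:ℝ)/(N n)) (((j:ℝ)+1)/(N n))) := by
          simp [ENNReal.rpow_one]
      _ ≤ ∑ j : Fin (N n), eVariationOn f (Icc ((j:ℝ)/(N n)) (((j:ℝ)+1)/(N n))) := by
          apply Finset.sum_le_sum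
          intro j _
          apply EMetric.diam_le
          rintro x ⟨p, hp, rfl⟩ y ⟨q, hq, rfl⟩
          exact eVariationOn.edist_le f hp hq
      _ = eVariationOn f (Icc 0 1) := by
          have := sum_evar f (fun j => (j:ℝ)/(N n)) ?_ (N n)
          · rw [Fin.sum_univ_eq_sum_range
              (fun j => eVariationOn f (Icc ((j:ℝ)/(N n)) (((j:ℝ)+1)/(N n))))] at *
            simp only [Nat.cast_zero, zero_div] at this
            rw [div_self hN'.ne'] at this
            convert this using 2 with j
            push_cast
            ring_nf
          · intro a b hab
            show (a:ℝ)/(N n) ≤ (b:ℝ)/(N n)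
            gcongr
  · apply Filter.Eventually.of_forall
    intro n j
    apply EMetric.diam_le
    rintro x ⟨p, hp, rfl⟩ y ⟨q, hq, rfl⟩
    have hN' : (0:ℝ) < N n := by exact_mod_cast hNpos n
    have hsub : Icc ((j:ℝ)/(N n)) (((j:ℝ)+1)/(N n)) ⊆ Icc (0:ℝ) 1 := by
      apply Icc_subset_Icc
      · positivity
      · rw [div_le_one hN']
        have := j.2
        exact_mod_cast Nat.succ_le_of_lt this
    have hd : dist p q ≤ 1/(N n : ℝ) := by
      rw [Real.dist_eq, abs_le]
      constructor <;> [skip; skip] <;>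
        · have h1 := hp.1; have h2 := hp.2; have h3 := hq.1; have h4 := hq.2
          have : ((j:ℝ)+1)/(N n) - (j:ℝ)/(N n) = 1/(N n) := by field_simp; ring
          linarith
    rw [edist_dist]
    exact ENNReal.ofReal_le_ofReal (hN n p (hsub hp) q (hsub hq) hd)
  · apply Filter.Eventually.of_forall
    intro n
    rintro x ⟨p, hp, rfl⟩
    obtain ⟨j, hj⟩ := exists_piece (hNpos n) hp
    exact mem_iUnion.2 ⟨j, mem_image_of_mem f hj⟩


lemma sum_edist_le_hausdorff (γ : ℝ → E3) (hγcont : ContinuousOn γ (Icc 0 1))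
    (hγinj : InjOn γ (Icc 0 1)) (n : ℕ) (u : ℕ → ℝ) (hu : Monotone u)
    (us : ∀ i, u i ∈ Icc (0:ℝ) 1) :
    ∑ i ∈ Finset.range n, edist (γ (u (i+1))) (γ (u i)) ≤ μH[1] (γ '' Icc 0 1) := by
  haveI : NoAtoms (μH[1] : Measure E3) := MeasureTheory.Measure.noAtoms_hausdorff (EuclideanSpace ℝ (Fin 3)) one_pos
  set B : ℕ → Set E3 := fun i => γ '' Ico (u i) (u (i+1)) with hB
  have hIccsub : ∀ i, Icc (u i) (u (i+1)) ⊆ Icc (0:ℝ) 1 :=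
    fun i => Icc_subset_Icc (us i).1 (us (i+1)).2
  have hBeq : ∀ i, B i = γ '' Icc (u i) (u (i+1)) \ {γ (u (i+1))} := by
    intro i
    ext x
    constructor
    · rintro ⟨w, hw, rfl⟩
      refine ⟨⟨w, Ico_subset_Icc_self hw, rfl⟩, ?_⟩
      simp only [mem_singleton_iff]
      intro h
      have := hγinj (hIccsub i (Ico_subset_Icc_self hw)) (us (i+1)) h
      exact absurd this (ne_of_lt hw.2)
    · rintro ⟨⟨w, hw, rfl⟩, hne⟩
      refine ⟨w, ⟨hw.1, lt_of_le_of_ne hw.2 ?_⟩, rfl⟩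
      intro h
      exact hne (by rw [h]; exact rfl)
  have hBmeas : ∀ i, MeasurableSet (B i) := by
    intro i
    rw [hBeq i]
    apply MeasurableSet.diff
    · exact ((isCompact_Icc.image_of_continuousOn (hγcont.mono (hIccsub i))).isClosed).measurableSet
    · exact measurableSet_singleton _
  have step1 : ∀ i, edist (γ (u (i+1))) (γ (u i)) ≤ μH[1] (B i) := by
    intro i
    have hconn : IsPreconnected (γ '' Icc (u i) (u (i+1))) :=
      (isPreconnected_Icc).image γ (hγcont.mono (hIccsub i))
    have h1 : edist (γ (u (i+1))) (γ (u i)) ≤ μH[1] (γ '' Icc (u i) (u (i+1))) := by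
      rw [edist_comm]
      exact edist_le_hausdorff hconn
        (mem_image_of_mem γ ⟨le_rfl, hu (Nat.le_succ i)⟩)
        (mem_image_of_mem γ ⟨hu (Nat.le_succ i), le_rfl⟩)
    refine h1.trans ?_
    have hsub : γ '' Icc (u i) (u (i+1)) ⊆ B i ∪ {γ (u (i+1))} := by
      rw [hBeq i]
      intro x hx
      by_cases hx1 : x ∈ ({γ (u (i+1))} : Set E3)
      · exact Or.inr hx1
      · exact Or.inl ⟨hx, hx1⟩
    calc μH[1] (γ '' Icc (u i) (u (i+1))) ≤ μH[1] (B i ∪ {γ (u (i+1))}) := measure_mono hsub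
      _ ≤ μH[1] (B i) + μH[1] {γ (u (i+1))} := measure_union_le _ _
      _ = μH[1] (B i) := by rw [NullSingletonClass.measure_singleton (self := this), add_zero]
  have hdisj : ∀ i j, i < j → Disjoint (B i) (B j) := by
    intro i j hij
    rw [Set.disjoint_left]
    rintro x ⟨w, hw, rfl⟩ ⟨w', hw', hww'⟩
    have hwI : w ∈ Icc (0:ℝ) 1 := ⟨(us i).1.trans hw.1, hw.2.le.trans (us (i+1)).2⟩
    have hw'I : w' ∈ Icc (0:ℝ) 1 := ⟨(us j).1.trans hw'.1, hw'.2.le.trans (us (j+1)).2⟩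
    have heq : w' = w := hγinj hw'I hwI hww'
    have hlt : w < w' := hw.2.trans_le ((hu (Nat.succ_le_of_lt hij)).trans hw'.1)
    linarith
  calc ∑ i ∈ Finset.range n, edist (γ (u (i+1))) (γ (u i))
      ≤ ∑ i ∈ Finset.range n, μH[1] (B i) := Finset.sum_le_sum fun i _ => step1 i
    _ = μH[1] (⋃ i ∈ Finset.range n, B i) := by
        rw [measure_biUnion_finset ?_ (fun i _ => hBmeas i)]
        intro i _ j _ hij
        exact (lt_or_gt_of_ne hij).elim (hdisj i j) (fun h => (hdisj j i h).symm)
    _ ≤ μH[1] (γ '' Icc 0 1) := by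
        apply measure_mono
        simp only [iUnion_subset_iff]
        intro i _
        exact (image_mono (f := γ) ((Ico_subset_Icc_self).trans (hIccsub i)))

/-- If `γ : [0,1] → ℝ³` is an injective continuous path and `β : [0,1] → ℝ³` is a continuous
path with the same endpoints whose image contains the image of `γ`, then
`length β ≥ length γ` (length = variation = sup over partitions of sums of distances). -/
theorem length_ge_of_image_superset
    (γ β : ℝ → EuclideanSpace ℝ (Fin 3))
    (hγcont : ContinuousOn γ (Icc 0 1))
    (hγinj : InjOn γ (Icc 0 1))
    (hβcont : ContinuousOn β (Icc 0 1))
    (h0 : β 0 = γ 0) (h1 : β 1 = γ 1)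
    (himg : γ '' Icc 0 1 ⊆ β '' Icc 0 1) :
    eVariationOn γ (Icc 0 1) ≤ eVariationOn β (Icc 0 1) := by
  have key : μH[1] (γ '' Icc 0 1) ≤ eVariationOn β (Icc 0 1) :=
    (measure_mono himg).trans (hausdorff_le_evar β hβcont)
  refine le_trans ?_ key
  unfold eVariationOn
  apply iSup_le
  rintro ⟨n, u, hu, us⟩
  exact sum_edist_le_hausdorff γ hγcont hγinj n u hu us
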